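/- Let T be as in the previous statement on the open simplex of positive probability vectors in ℝ^k. Then T^k is the identity map, i.e., applying T k times to any positive probability vector μ returns μ. -/

import Mathlib

/-- The map `T` on vectors `μ = (m₁, …, m_k)`:
`T μ = (m_k/2, m₁, …, m_{k−1}) / (1 − m_k/2)`. -/
noncomputable def Tmap (k : ℕ) (hk : 0 < k) (μ : Fin k → ℝ) : Fin k → ℝ :=
  fun i =>
    if (i : ℕ) = 0 then (μ ⟨k - 1, by omega⟩ / 2) / (1 - μ ⟨k - 1, by omega⟩ / 2)
    else μ ⟨(i : ℕ) - 1, by omega⟩ / (1 - μ ⟨k - 1, by omega⟩ / 2)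

lemma div_div_div_cancel' (a b c : ℝ) (hb : b ≠ 0) (hc : c ≠ 0) :
    a / c / (b / c) = a / b := by
  field_simp

lemma fin_congr {k : ℕ} (μ : Fin k → ℝ) {a b : ℕ} (ha : a < k) (hb : b < k) (h : a = b) :
    μ ⟨a, ha⟩ = μ ⟨b, hb⟩ := by subst h; rfl

/-- Unnormalized linear version of `T`. -/
noncomputable def Lfun (k : ℕ) (hk : 0 < k) (v : Fin k → ℝ) : Fin k → ℝ :=
  fun i =>
    if (i : ℕ) = 0 then v ⟨k - 1, by omega⟩ / 2
    else v ⟨(i : ℕ) - 1, by omega⟩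

lemma sum_Lfun (k : ℕ) (hk : 0 < k) (v : Fin k → ℝ) :
    ∑ i, Lfun k hk v i = ∑ i, v i - v ⟨k - 1, by omega⟩ / 2 := by
  obtain ⟨m, rfl⟩ : ∃ m, k = m + 1 := ⟨k - 1, by omega⟩
  rw [Fin.sum_univ_succ, Fin.sum_univ_castSucc (f := v)]
  have h0 : Lfun (m+1) hk v 0 = v ⟨m, by omega⟩ / 2 := by
    simp [Lfun]
  have hsucc : ∀ i : Fin m, Lfun (m+1) hk v i.succ = v i.castSucc := by
    intro i
    have hval : ((i.succ : Fin (m+1)) : ℕ) = (i : ℕ) + 1 := rfl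
    simp only [Lfun, hval]
    rw [if_neg (by omega)]
    exact fin_congr v _ _ (by omega)
  rw [h0, Finset.sum_congr rfl (fun i _ => hsucc i)]
  have h1 : v (Fin.last m) = v ⟨m, by omega⟩ := rfl
  have h2 : v (⟨m + 1 - 1, by omega⟩ : Fin (m+1)) = v ⟨m, by omega⟩ :=
    fin_congr v _ _ (by omega)
  rw [h1, h2]
  ring

lemma Tmap_norm (k : ℕ) (hk : 0 < k) (v : Fin k → ℝ) (hv : ∀ i, 0 < v i) :
    Tmap k hk (fun i => v i / ∑ j, v j) =
      fun i => Lfun k hk v i / ∑ j, Lfun k hk v j := by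
  have hs : 0 < ∑ j, v j := Finset.sum_pos (fun i _ => hv i) ⟨⟨k-1, by omega⟩, Finset.mem_univ _⟩
  have hlast : v ⟨k-1, by omega⟩ ≤ ∑ j, v j :=
    Finset.single_le_sum (f := v) (fun i _ => (hv i).le) (Finset.mem_univ _)
  have hpos : 0 < v ⟨k-1, by omega⟩ := hv _
  have hs2 : 0 < ∑ j, v j - v ⟨k-1, by omega⟩ / 2 := by linarith
  funext i
  rw [sum_Lfun]
  have hden : 1 - (v ⟨k-1, by omega⟩ / ∑ j, v j) / 2
      = (∑ j, v j - v ⟨k-1, by omega⟩ / 2) / ∑ j, v j := by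
    field_simp
  show Tmap k hk (fun i => v i / ∑ j, v j) i = _
  simp only [Tmap, Lfun, hden]
  split
  · rw [div_right_comm, div_div_div_cancel' _ _ _ hs2.ne' hs.ne', div_right_comm]
  · rw [div_div_div_cancel' _ _ _ hs2.ne' hs.ne']

/-- The `n`-th power of `L`, for `n ≤ k`, in closed form. -/
noncomputable def Lpow (k n : ℕ) (hk : 0 < k) (hn : n ≤ k) (μ : Fin k → ℝ) : Fin k → ℝ :=
  fun i =>
    if h : (i : ℕ) < n then μ ⟨(i : ℕ) + k - n, by omega⟩ / 2
    else μ ⟨(i : ℕ) - n, by omega⟩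

lemma Lpow_zero (k : ℕ) (hk : 0 < k) (μ : Fin k → ℝ) :
    Lpow k 0 hk (by omega) μ = μ := by
  funext i
  simp [Lpow]

lemma Lpow_pos (k n : ℕ) (hk : 0 < k) (hn : n ≤ k) (μ : Fin k → ℝ)
    (hpos : ∀ i, 0 < μ i) : ∀ i, 0 < Lpow k n hk hn μ i := by
  intro i
  unfold Lpow
  split
  · exact div_pos (hpos _) two_pos
  · exact hpos _

lemma Lpow_succ (k n : ℕ) (hk : 0 < k) (hn : n < k) (μ : Fin k → ℝ) :
    Lfun k hk (Lpow k n hk hn.le μ) = Lpow k (n+1) hk hn μ := by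
  funext i
  have hi := i.isLt
  simp only [Lfun, Lpow]
  by_cases h0 : (i : ℕ) = 0
  · rw [if_pos h0]
    rw [dif_neg (by show ¬ (k - 1 < n); omega)]
    rw [dif_pos (by omega)]
    congr 1
    exact fin_congr μ _ _ (by omega)
  · rw [if_neg h0]
    by_cases h1 : (i : ℕ) - 1 < n
    · rw [dif_pos (by show (i:ℕ) - 1 < n; omega)]
      rw [dif_pos (by omega)]
      congr 1
      exact fin_congr μ _ _ (by omega)
    · rw [dif_neg (by show ¬ ((i:ℕ) - 1 < n); omega)]
      rw [dif_neg (by omega)]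
      exact fin_congr μ _ _ (by omega)

lemma Lpow_k (k : ℕ) (hk : 0 < k) (μ : Fin k → ℝ) :
    Lpow k k hk le_rfl μ = fun i => μ i / 2 := by
  funext i
  have hi := i.isLt
  rw [Lpow, dif_pos hi]
  have : μ (⟨(i:ℕ) + k - k, by omega⟩ : Fin k) = μ ⟨(i:ℕ), i.isLt⟩ :=
    fin_congr μ _ _ (by omega)
  rw [this]

lemma key (k : ℕ) (hk : 0 < k) (μ : Fin k → ℝ)
    (hpos : ∀ i, 0 < μ i) (hsum : ∑ i, μ i = 1) :
    ∀ n (hn : n ≤ k), (Tmap k hk)^[n] μ =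
      fun i => Lpow k n hk hn μ i / ∑ j, Lpow k n hk hn μ j := by
  intro n
  induction n with
  | zero =>
    intro hn
    rw [Lpow_zero]
    simp [hsum]
  | succ n ih =>
    intro hn
    have hn' : n ≤ k := by omega
    rw [Function.iterate_succ_apply', ih hn', Tmap_norm k hk _ (Lpow_pos k n hk hn' μ hpos)]
    rw [Lpow_succ k n hk (by omega) μ]

theorem Tmap_iterate_k (k : ℕ) (hk : 0 < k) (μ : Fin k → ℝ)
    (hpos : ∀ i, 0 < μ i) (hsum : ∑ i, μ i = 1) :
    (Tmap k hk)^[k] μ = μ := by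
  rw [key k hk μ hpos hsum k le_rfl, Lpow_k]
  funext i
  rw [← Finset.sum_div, hsum]
  show μ i / 2 / (1 / 2) = μ i
  rw [div_div_div_cancel' _ _ _ one_ne_zero two_ne_zero, div_one]
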